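/- The function Z(s,t) = π (s cosh(πt/6) - π sinh(πt/6)) / (π cosh(πt/6) - s sinh(πt/6)) satisfies, for each s ∈ [-π, π], the ODE ∂_t Z(s,t) = (1/6)(Z(s,t)^2 - π^2) with initial condition Z(s,0) = s, and Z(s,t) ∈ [-π, π] for all t ∈ ℝ when s ∈ [-π, π]. -/

import Mathlib

open Real

noncomputable def Zchar (s t : ℝ) : ℝ :=
  π * (s * Real.cosh (π * t / 6) - π * Real.sinh (π * t / 6)) /
    (π * Real.cosh (π * t / 6) - s * Real.sinh (π * t / 6))

lemma Dpos {s : ℝ} (hs : s ∈ Set.Icc (-π) π) (t : ℝ) :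
    0 < π * Real.cosh (π * t / 6) - s * Real.sinh (π * t / 6) := by
  obtain ⟨h1, h2⟩ := hs
  set a := π * t / 6
  rw [Real.cosh_eq, Real.sinh_eq]
  rcases lt_or_eq_of_le h2 with hsp | hsp
  · nlinarith [Real.exp_pos a, Real.exp_pos (-a), Real.pi_pos,
      mul_pos (by linarith : (0:ℝ) < π - s) (Real.exp_pos a),
      mul_nonneg (by linarith [Real.pi_pos] : (0:ℝ) ≤ π + s) (Real.exp_pos (-a)).le]
  · subst hsp
    nlinarith [Real.exp_pos a, Real.exp_pos (-a), Real.pi_pos,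
      mul_pos Real.pi_pos (Real.exp_pos (-a))]

theorem characteristic_curves_ODE :
    ∀ s ∈ Set.Icc (-π) π,
      Zchar s 0 = s ∧
      (∀ t : ℝ, HasDerivAt (fun t => Zchar s t) (((Zchar s t) ^ 2 - π ^ 2) / 6) t) ∧
      (∀ t : ℝ, Zchar s t ∈ Set.Icc (-π) π) := by
  intro s hs
  have hpi := Real.pi_pos
  refine ⟨?_, ?_, ?_⟩
  · simp [Zchar, Real.cosh_zero, Real.sinh_zero]
  · intro t
    have hD := Dpos hs t
    have ha : HasDerivAt (fun t : ℝ => π * t / 6) (π / 6) t := by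
      simpa using ((hasDerivAt_id t).const_mul π).div_const 6
    have hc : HasDerivAt (fun t : ℝ => Real.cosh (π * t / 6))
        (Real.sinh (π * t / 6) * (π / 6)) t := ha.cosh
    have hsh : HasDerivAt (fun t : ℝ => Real.sinh (π * t / 6))
        (Real.cosh (π * t / 6) * (π / 6)) t := ha.sinh
    have hN : HasDerivAt (fun t : ℝ => π * (s * Real.cosh (π * t / 6) - π * Real.sinh (π * t / 6)))
        (π * (s * (Real.sinh (π * t / 6) * (π / 6)) - π * (Real.cosh (π * t / 6) * (π / 6)))) t :=
      ((hc.const_mul s).sub (hsh.const_mul π)).const_mul π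
    have hDd : HasDerivAt (fun t : ℝ => π * Real.cosh (π * t / 6) - s * Real.sinh (π * t / 6))
        (π * (Real.sinh (π * t / 6) * (π / 6)) - s * (Real.cosh (π * t / 6) * (π / 6))) t :=
      (hc.const_mul π).sub (hsh.const_mul s)
    have h := hN.div hDd hD.ne'
    refine h.congr_deriv ?_
    unfold Zchar
    have hid : Real.cosh (π * t / 6) ^ 2 - Real.sinh (π * t / 6) ^ 2 = 1 := by
      have := Real.cosh_sq_sub_sinh_sq (π * t / 6)
      nlinarith [this]
    field_simp
    nlinarith [hid, sq_nonneg (π * Real.cosh (π * t / 6) - s * Real.sinh (π * t / 6))]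
  · intro t
    have hD := Dpos hs t
    obtain ⟨h1, h2⟩ := hs
    set a := π * t / 6
    have hDN : (π * Real.cosh a - s * Real.sinh a) - (s * Real.cosh a - π * Real.sinh a)
        = (π - s) * Real.exp a := by
      rw [Real.cosh_eq, Real.sinh_eq]; ring
    have hDpN : (π * Real.cosh a - s * Real.sinh a) + (s * Real.cosh a - π * Real.sinh a)
        = (π + s) * Real.exp (-a) := by
      rw [Real.cosh_eq, Real.sinh_eq]; ring
    have hDN' : 0 ≤ (π - s) * Real.exp a :=
      mul_nonneg (by linarith) (Real.exp_pos a).le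
    have hDpN' : 0 ≤ (π + s) * Real.exp (-a) :=
      mul_nonneg (by linarith) (Real.exp_pos (-a)).le
    constructor
    · rw [Zchar, le_div_iff₀ hD]
      nlinarith
    · rw [Zchar, div_le_iff₀ hD]
      nlinarith
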